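/- Let V be a real Banach space, (U, ϱ) a probability space, {ψ_j}_{j=1}^N a finite orthonormal system in L²_ϱ(U), v ∈ V with ‖v‖_V = 1, and c = (c_j)_{j=1}^N ∈ ℝ^N. Define f ∈ L²_ϱ(U;V) by f(y) = (∑_{j=1}^N c_j ψ_j(y))·v. Then for every h ∈ L²_ϱ(U;V) there exists d = (d_j)_{j=1}^N ∈ ℝ^N such that ‖f − h‖_{L²_ϱ(U;V)} ≥ ( ∑_{j=1}^N |c_j − d_j|² )^{1/2} = ‖c − d‖₂; one may take d_j = ∫_U ψ_j(y)·φ(h(y)) dϱ(y), where φ ∈ V* is any norm-one continuous linear functional with φ(v) = 1 (which exists by the Hahn–Banach theorem). -/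

import Mathlib

open MeasureTheory Finset

noncomputable section

private lemma aux_int_mul {U : Type*} [MeasurableSpace U] {ϱ : Measure U}
    {f g : U → ℝ} (hf : MemLp f 2 ϱ) (hg : MemLp g 2 ϱ) :
    Integrable (fun y => f y * g y) ϱ := by
  rw [← memLp_one_iff_integrable]
  have h12 : (1 : ENNReal) / 1 = 1 / 2 + 1 / 2 := by
    rw [ENNReal.div_add_div_same, one_add_one_eq_two, one_div_one]
    exact (ENNReal.div_self (by norm_num) (by norm_num)).symm
  haveI : ENNReal.HolderTriple 2 2 1 := ⟨by simpa only [one_div] using h12.symm⟩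
  exact hg.smul (r := 1) hf

/-- key step in Lemma 4.2: let `V` be a real Banach space,
`(U, ϱ)` a probability space, `{ψ_j}_{j=1}^N` a finite orthonormal system in
`L²_ϱ(U)`, `v ∈ V` with `‖v‖ = 1`, `c ∈ ℝ^N`, and `f(y) = (∑_j c_j ψ_j(y)) • v`.
Then for every `h ∈ L²_ϱ(U; V)` there exists `d ∈ ℝ^N` with
`‖c - d‖₂ ≤ ‖f - h‖_{L²_ϱ(U;V)}`; one may take `d_j = ∫ ψ_j(y) φ(h(y)) dϱ(y)`,
where `φ ∈ V*` is any norm-one continuous linear functional with `φ(v) = 1`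
(which exists by Hahn–Banach). -/
theorem statement13 {V : Type*} [NormedAddCommGroup V] [NormedSpace ℝ V]
    [CompleteSpace V]
    {U : Type*} [MeasurableSpace U] (ϱ : Measure U) [IsProbabilityMeasure ϱ]
    {N : ℕ} (ψ : Fin N → U → ℝ) (hψ : ∀ j, MemLp (ψ j) 2 ϱ)
    (horth : ∀ i j : Fin N, ∫ y, ψ i y * ψ j y ∂ϱ = if i = j then 1 else 0)
    (v : V) (hv : ‖v‖ = 1) (c : Fin N → ℝ)
    (f : U → V) (hf : ∀ y, f y = (∑ j, c j * ψ j y) • v)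
    (h : U → V) (hh : MemLp h 2 ϱ)
    (φ : V →L[ℝ] ℝ) (hφ : ‖φ‖ = 1) (hφv : φ v = 1) :
    ∃ d : Fin N → ℝ, (∀ j, d j = ∫ y, ψ j y * φ (h y) ∂ϱ) ∧
      Real.sqrt (∑ j, (c j - d j) ^ 2) ≤ Real.sqrt (∫ y, ‖f y - h y‖ ^ 2 ∂ϱ) := by
  classical
  -- the scalar part of f
  set s : U → ℝ := fun y => ∑ j, c j * ψ j y with hs
  have hsmem : MemLp s 2 ϱ := by
    have := memLp_finset_sum' (μ := ϱ) univ (fun j _ => (hψ j).const_mul (c j))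
    have heq : s = ∑ j, fun y => c j * ψ j y := by funext y; simp [hs]
    rwa [heq]
  -- f is MemLp 2
  have hfmem : MemLp f 2 ϱ := by
    have : MemLp (fun y => s y • v) 2 ϱ := by
      have := (ContinuousLinearMap.comp_memLp'
        ((ContinuousLinearMap.id ℝ ℝ).smulRight v) hsmem)
      simpa [Function.comp_def] using this
    have heq : f = fun y => s y • v := funext fun y => hf y
    rwa [heq]
  -- the scalar function g = φ ∘ (f - h)
  set g : U → ℝ := fun y => φ (f y - h y) with hgdef
  have hgmem : MemLp g 2 ϱ := by
    have := φ.comp_memLp' (hfmem.sub hh)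
    simpa [Function.comp_def, hgdef] using this
  have hgval : ∀ y, g y = s y - φ (h y) := by
    intro y
    simp [hgdef, hf y, map_sub, φ.map_smul, hφv, smul_eq_mul]
    rfl
  -- φ ∘ h is MemLp 2
  have hφh : MemLp (fun y => φ (h y)) 2 ϱ := by
    have := φ.comp_memLp' hh
    simpa [Function.comp_def] using this
  set d : Fin N → ℝ := fun j => ∫ y, ψ j y * φ (h y) ∂ϱ with hd
  set a : Fin N → ℝ := fun j => c j - d j with ha
  -- key: a j = ∫ ψ j * g
  have hag : ∀ j, a j = ∫ y, ψ j y * g y ∂ϱ := by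
    intro j
    have h1 : (fun y => ψ j y * g y)
        = fun y => ψ j y * s y - ψ j y * φ (h y) := by
      funext y; rw [hgval y]; ring
    have hint1 : Integrable (fun y => ψ j y * s y) ϱ := aux_int_mul (hψ j) hsmem
    have hint2 : Integrable (fun y => ψ j y * φ (h y)) ϱ := aux_int_mul (hψ j) hφh
    have h2 : ∫ y, ψ j y * s y ∂ϱ = c j := by
      have h3 : (fun y => ψ j y * s y)
          = fun y => ∑ k, c k * (ψ j y * ψ k y) := by
        funext y; simp only [hs, Finset.mul_sum]; congr 1; funext k; ring
      rw [h3, integral_finset_sum]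
      · simp only [integral_const_mul, horth]
        simp
      · intro k _
        exact (aux_int_mul (hψ j) (hψ k)).const_mul (c k)
    rw [h1, integral_sub hint1 hint2, h2]
  -- the projection S
  set S : U → ℝ := fun y => ∑ j, a j * ψ j y with hS
  have hSmem : MemLp S 2 ϱ := by
    have := memLp_finset_sum' (μ := ϱ) univ (fun j _ => (hψ j).const_mul (a j))
    have heq : S = ∑ j, fun y => a j * ψ j y := by funext y; simp [hS]
    rwa [heq]
  -- ∫ w * S for any w ∈ L²
  have hwS : ∀ w : U → ℝ, MemLp w 2 ϱ →
      ∫ y, w y * S y ∂ϱ = ∑ j, a j * ∫ y, w y * ψ j y ∂ϱ := by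
    intro w hw
    have h1 : (fun y => w y * S y) = fun y => ∑ j, a j * (w y * ψ j y) := by
      funext y; simp only [hS, Finset.mul_sum]; congr 1; funext j; ring
    rw [h1, integral_finset_sum]
    · congr 1; funext j; rw [integral_const_mul]
    · intro j _
      exact (aux_int_mul hw (hψ j)).const_mul (a j)
  have hgS : ∫ y, g y * S y ∂ϱ = ∑ j, a j ^ 2 := by
    rw [hwS g hgmem]
    congr 1; funext j
    have : ∫ y, g y * ψ j y ∂ϱ = a j := by
      rw [hag j]; congr 1; funext y; ring
    rw [this]; ring
  have hSψ : ∀ j, ∫ y, S y * ψ j y ∂ϱ = a j := by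
    intro j
    have h1 : (fun y => S y * ψ j y) = fun y => ∑ k, a k * (ψ j y * ψ k y) := by
      funext y; simp only [hS, Finset.sum_mul]; congr 1; funext k; ring
    rw [h1, integral_finset_sum]
    · simp only [integral_const_mul, horth]
      simp
    · intro k _
      exact (aux_int_mul (hψ j) (hψ k)).const_mul (a k)
  have hSS : ∫ y, S y * S y ∂ϱ = ∑ j, a j ^ 2 := by
    rw [hwS S hSmem]
    congr 1; funext j
    rw [hSψ j]; ring
  -- Bessel
  have hbessel : ∑ j, a j ^ 2 ≤ ∫ y, g y ^ 2 ∂ϱ := by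
    have hnn : 0 ≤ ∫ y, (g y - S y) ^ 2 ∂ϱ :=
      integral_nonneg fun y => sq_nonneg _
    have hexp : (fun y => (g y - S y) ^ 2)
        = fun y => g y ^ 2 - 2 * (g y * S y) + S y * S y := by
      funext y; ring
    have hig2 : Integrable (fun y => g y ^ 2) ϱ := hgmem.integrable_sq
    have higS : Integrable (fun y => 2 * (g y * S y)) ϱ :=
      (aux_int_mul hgmem hSmem).const_mul 2
    have hiSS : Integrable (fun y => S y * S y) ϱ := aux_int_mul hSmem hSmem
    have hsub : Integrable (fun y => g y ^ 2 - 2 * (g y * S y)) ϱ :=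
      hig2.sub higS
    have : ∫ y, (g y - S y) ^ 2 ∂ϱ
        = (∫ y, g y ^ 2 ∂ϱ) - (∫ y, 2 * (g y * S y) ∂ϱ) + ∫ y, S y * S y ∂ϱ := by
      rw [hexp, integral_add hsub hiSS, integral_sub hig2 higS]
    rw [this, integral_const_mul, hgS, hSS] at hnn
    linarith
  -- |g| ≤ ‖f - h‖ pointwise
  have hcomp : ∫ y, g y ^ 2 ∂ϱ ≤ ∫ y, ‖f y - h y‖ ^ 2 ∂ϱ := by
    apply integral_mono hgmem.integrable_sq (hfmem.sub hh).norm.integrable_sq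
    intro y
    have h1 : |g y| ≤ ‖f y - h y‖ := by
      have h2 := φ.le_opNorm (f y - h y)
      rw [show g y = φ (f y - h y) from rfl]
      simpa [hφ, Real.norm_eq_abs] using h2
    calc g y ^ 2 = |g y| ^ 2 := (sq_abs _).symm
      _ ≤ ‖f y - h y‖ ^ 2 := by
          apply pow_le_pow_left₀ (abs_nonneg _) h1
  refine ⟨d, fun j => rfl, ?_⟩
  apply Real.sqrt_le_sqrt
  calc ∑ j, (c j - d j) ^ 2 = ∑ j, a j ^ 2 := rfl
    _ ≤ ∫ y, g y ^ 2 ∂ϱ := hbessel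
    _ ≤ _ := hcomp
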